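/- Let X be a topological vector space, Y ⊆ X a subspace, and A ⊆ X an open convex set intersecting Y. If A ∩ Y is the intersection of countably many open convex subsets of X, then there exists a continuous quasiconvex function δ : A → [0,∞) with δ⁻¹(0) = A ∩ Y. -/

import Mathlib

open Set

theorem stmt_9 {X : Type*} [AddCommGroup X] [Module ℝ X] [TopologicalSpace X]
    [IsTopologicalAddGroup X] [ContinuousSMul ℝ X]
    (Y : Submodule ℝ X) (A : Set X) (hAopen : IsOpen A) (hAconv : Convex ℝ A)
    (hne : (A ∩ (Y : Set X)).Nonempty)
    (U : ℕ → Set X) (hU : ∀ n, IsOpen (U n) ∧ Convex ℝ (U n))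
    (hInter : (⋂ n, U n) = A ∩ (Y : Set X)) :
    ∃ δ : X → ℝ, ContinuousOn δ A ∧ QuasiconvexOn ℝ A δ ∧
      (∀ x ∈ A, 0 ≤ δ x) ∧ {x ∈ A | δ x = 0} = A ∩ (Y : Set X) := by
  obtain ⟨y₀, hy₀A, hy₀Y⟩ := hne
  have hAYU : ∀ n, A ∩ (Y : Set X) ⊆ U n := fun n => hInter ▸ iInter_subset U n
  -- the nested open convex sets
  set W : ℕ → Set X := fun n => A ∩ ⋂ k : Fin (n + 1), U k with hWdef
  have hWopen : ∀ n, IsOpen (W n) :=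
    fun n => hAopen.inter (isOpen_iInter_of_finite fun k => (hU k).1)
  have hWconv : ∀ n, Convex ℝ (W n) :=
    fun n => hAconv.inter (convex_iInter fun k => (hU k).2)
  have hmemW : ∀ n x, x ∈ W n ↔ x ∈ A ∧ ∀ k : Fin (n + 1), x ∈ U k := by
    intro n x; simp [hWdef, mem_iInter]
  have hWanti : ∀ {a b : ℕ}, a ≤ b → W b ⊆ W a := by
    intro a b hab x hx
    obtain ⟨hxA, hxU⟩ := (hmemW b x).mp hx
    exact (hmemW a x).mpr ⟨hxA, fun k => hxU ⟨k.1, by omega⟩⟩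
  have hAYW : ∀ n, A ∩ (Y : Set X) ⊆ W n := by
    intro n x hx
    exact (hmemW n x).mpr ⟨hx.1, fun k => hAYU k hx⟩
  have hy₀W : ∀ n, y₀ ∈ W n := fun n => hAYW n ⟨hy₀A, hy₀Y⟩
  -- translated sets
  set C : ℕ → Set X := fun n => (fun v => v + y₀) ⁻¹' W n with hCdef
  have hCopen : ∀ n, IsOpen (C n) :=
    fun n => (hWopen n).preimage (continuous_id.add continuous_const)
  have hCconv : ∀ n, Convex ℝ (C n) := fun n => (hWconv n).translate_preimage_left y₀
  have h0C : ∀ n, (0 : X) ∈ C n := by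
    intro n; show (0 : X) + y₀ ∈ W n; rw [zero_add]; exact hy₀W n
  have hCnhds : ∀ n, C n ∈ nhds (0 : X) := fun n => (hCopen n).mem_nhds (h0C n)
  have hCabs : ∀ n, Absorbent ℝ (C n) := fun n => absorbent_nhds_zero (hCnhds n)
  have hCanti : ∀ {a b : ℕ}, a ≤ b → C b ⊆ C a :=
    fun hab => preimage_mono (hWanti hab)
  have hmemC : ∀ n x, x ∈ W n ↔ x - y₀ ∈ C n := by
    intro n x
    show x ∈ W n ↔ x - y₀ + y₀ ∈ W n
    rw [sub_add_cancel]
  -- the gauges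
  set g : ℕ → X → ℝ := fun n x => gauge (C n) (x - y₀) with hgdef
  have hgmono : ∀ {a b : ℕ}, a ≤ b → ∀ x, g a x ≤ g b x :=
    fun hab x => gauge_mono (hCabs _) (hCanti hab) _
  have hgcont : ∀ n, Continuous (g n) :=
    fun n => (continuous_gauge (hCconv n) (hCnhds n)).comp (continuous_id.sub continuous_const)
  have hgnonneg : ∀ n x, 0 ≤ g n x := fun n x => gauge_nonneg _
  -- convex-combination bound for the gauges
  have hgcc : ∀ n (x y : X) (a b : ℝ), 0 ≤ a → 0 ≤ b → a + b = 1 →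
      g n (a • x + b • y) ≤ max (g n x) (g n y) := by
    intro n x y a b ha hb hab
    have hsplit : a • x + b • y - y₀ = a • (x - y₀) + b • (y - y₀) := by
      have h1 : a • (x - y₀) + b • (y - y₀) = a • x + b • y - (a + b) • y₀ := by module
      rw [h1, hab, one_smul]
    have h1 : g n (a • x + b • y) ≤ a * g n x + b * g n y := by
      show gauge (C n) (a • x + b • y - y₀) ≤ _
      rw [hsplit]
      calc gauge (C n) (a • (x - y₀) + b • (y - y₀))
          ≤ gauge (C n) (a • (x - y₀)) + gauge (C n) (b • (y - y₀)) :=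
            gauge_add_le (hCconv n) (hCabs n) _ _
        _ = a * g n x + b * g n y := by
            rw [gauge_smul_of_nonneg ha, gauge_smul_of_nonneg hb, smul_eq_mul, smul_eq_mul]
    have h2 : a * g n x + b * g n y ≤ max (g n x) (g n y) := by
      calc a * g n x + b * g n y
          ≤ a * max (g n x) (g n y) + b * max (g n x) (g n y) :=
            add_le_add (mul_le_mul_of_nonneg_left (le_max_left _ _) ha)
              (mul_le_mul_of_nonneg_left (le_max_right _ _) hb)
        _ = max (g n x) (g n y) := by rw [← add_mul, hab, one_mul]
    linarith
  -- the clamped functions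
  set θ : ℕ → X → ℝ := fun n x => min (max ((2 : ℝ) ^ (n + 1) * (g n x - 1) - 1) 0) 1
    with hθdef
  have hθnonneg : ∀ n x, 0 ≤ θ n x := fun n x => le_min (le_max_right _ _) zero_le_one
  have hθle1 : ∀ n x, θ n x ≤ 1 := fun n x => min_le_right _ _
  have hθcont : ∀ n, Continuous (θ n) := by
    intro n
    exact (((continuous_const.mul ((hgcont n).sub continuous_const)).sub
      continuous_const).max continuous_const).min continuous_const
  -- θ is monotone in the gauge value
  have hθgmono : ∀ n (x y : X), g n x ≤ g n y → θ n x ≤ θ n y := by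
    intro n x y h
    have hpow : (0 : ℝ) ≤ 2 ^ (n + 1) := by positivity
    refine min_le_min (max_le_max ?_ le_rfl) le_rfl
    nlinarith
  -- positivity of θ at one index forces θ = 1 at all later indices
  have hkey : ∀ (x : X) (p q : ℕ), p < q → 0 < θ p x → θ q x = 1 := by
    intro x p q hpq hp
    have hs : 1 < 2 ^ (p + 1) * (g p x - 1) := by
      by_contra h
      push_neg at h
      have : max ((2 : ℝ) ^ (p + 1) * (g p x - 1) - 1) 0 = 0 :=
        max_eq_right (by linarith)
      rw [hθdef] at hp
      simp only [this] at hp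
      simp at hp
    have hgle : g p x ≤ g q x := hgmono (le_of_lt hpq) x
    have hpowp : (0 : ℝ) < 2 ^ (p + 1) := by positivity
    have hpow2 : 2 * (2 : ℝ) ^ (p + 1) ≤ 2 ^ (q + 1) := by
      calc 2 * (2 : ℝ) ^ (p + 1) = 2 ^ (p + 2) := by ring
        _ ≤ 2 ^ (q + 1) := pow_le_pow_right₀ one_le_two (by omega)
    have h2 : (2 : ℝ) ≤ 2 ^ (q + 1) * (g q x - 1) := by
      have hg1 : 1 / 2 ^ (p + 1) < g p x - 1 := by
        rw [div_lt_iff₀ hpowp]; nlinarith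
      have hgq1 : 1 / 2 ^ (p + 1) < g q x - 1 := lt_of_lt_of_le hg1 (by linarith)
      have hpos : (0 : ℝ) < g q x - 1 := lt_trans (by positivity) hgq1
      calc (2 : ℝ) = (2 * 2 ^ (p + 1)) * (1 / 2 ^ (p + 1)) := by field_simp
        _ ≤ 2 ^ (q + 1) * (g q x - 1) := by
            apply mul_le_mul hpow2 (le_of_lt hgq1) (by positivity) (by positivity)
    show min (max ((2 : ℝ) ^ (q + 1) * (g q x - 1) - 1) 0) 1 = 1
    rw [min_eq_right]
    exact le_max_of_le_left (by linarith)
  -- summability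
  have hterm_nonneg : ∀ (x : X) (n : ℕ), 0 ≤ (1 / 2 : ℝ) ^ (n + 1) * θ n x :=
    fun x n => mul_nonneg (by positivity) (hθnonneg n x)
  have hterm_le : ∀ (x : X) (n : ℕ), (1 / 2 : ℝ) ^ (n + 1) * θ n x ≤ (1 / 2 : ℝ) ^ n := by
    intro x n
    have h1 : (1 / 2 : ℝ) ^ (n + 1) * θ n x ≤ (1 / 2 : ℝ) ^ (n + 1) * 1 :=
      mul_le_mul_of_nonneg_left (hθle1 n x) (by positivity)
    have h2 : ((1 : ℝ) / 2) ^ (n + 1) ≤ (1 / 2 : ℝ) ^ n := by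
      apply pow_le_pow_of_le_one (by norm_num) (by norm_num) (by omega)
    linarith
  have hsumm : ∀ x : X, Summable (fun n => (1 / 2 : ℝ) ^ (n + 1) * θ n x) := by
    intro x
    exact Summable.of_nonneg_of_le (hterm_nonneg x) (hterm_le x) summable_geometric_two
  refine ⟨fun x => ∑' n, (1 / 2 : ℝ) ^ (n + 1) * θ n x, ?_, ?_, ?_, ?_⟩
  · -- continuity
    refine Continuous.continuousOn ?_
    apply continuous_tsum (u := fun n => (1 / 2 : ℝ) ^ n)
      (fun n => continuous_const.mul (hθcont n)) summable_geometric_two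
    intro n x
    show ‖(1 / 2 : ℝ) ^ (n + 1) * θ n x‖ ≤ _
    rw [Real.norm_eq_abs, abs_of_nonneg (hterm_nonneg x n)]
    exact hterm_le x n
  · -- quasiconvexity
    intro c x hx y hy a b ha hb hab
    obtain ⟨hxA, hxc⟩ := hx
    obtain ⟨hyA, hyc⟩ := hy
    refine ⟨hAconv hxA hyA ha hb hab, ?_⟩
    have horder : (∀ n, θ n x ≤ θ n y) ∨ (∀ n, θ n y ≤ θ n x) := by
      by_contra h
      push_neg at h
      obtain ⟨⟨p, hp⟩, ⟨q, hq⟩⟩ := h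
      rcases lt_trichotomy p q with hlt | heq | hgt
      · have := hkey x p q hlt (lt_of_le_of_lt (hθnonneg p y) hp)
        have h1 := hθle1 q y
        rw [this] at hq
        linarith
      · rw [heq] at hp; linarith
      · have := hkey y q p hgt (lt_of_le_of_lt (hθnonneg q x) hq)
        have h1 := hθle1 p x
        rw [this] at hp
        linarith
    have hθcc : ∀ n, θ n (a • x + b • y) ≤ max (θ n x) (θ n y) := by
      intro n
      have hg := hgcc n x y a b ha hb hab
      rcases le_total (g n x) (g n y) with h | h
      · rw [max_eq_right h] at hg
        exact le_trans (hθgmono n _ y hg) (le_max_right _ _)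
      · rw [max_eq_left h] at hg
        exact le_trans (hθgmono n _ x hg) (le_max_left _ _)
    rcases horder with h | h
    · -- θ n x ≤ θ n y for all n, so δ z ≤ δ y ≤ c
      have : ∑' n, (1 / 2 : ℝ) ^ (n + 1) * θ n (a • x + b • y)
          ≤ ∑' n, (1 / 2 : ℝ) ^ (n + 1) * θ n y := by
        apply Summable.tsum_le_tsum _ (hsumm _) (hsumm y)
        intro n
        apply mul_le_mul_of_nonneg_left _ (by positivity)
        have := hθcc n
        rw [max_eq_right (h n)] at this
        exact this
      linarith
    · have : ∑' n, (1 / 2 : ℝ) ^ (n + 1) * θ n (a • x + b • y)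
          ≤ ∑' n, (1 / 2 : ℝ) ^ (n + 1) * θ n x := by
        apply Summable.tsum_le_tsum _ (hsumm _) (hsumm x)
        intro n
        apply mul_le_mul_of_nonneg_left _ (by positivity)
        have := hθcc n
        rw [max_eq_left (h n)] at this
        exact this
      linarith
  · -- nonnegativity
    intro x _
    exact tsum_nonneg (hterm_nonneg x)
  · -- the zero set
    ext x
    simp only [mem_setOf_eq, mem_inter_iff, SetLike.mem_coe]
    constructor
    · rintro ⟨hxA, hx0⟩
      refine ⟨hxA, ?_⟩
      -- all θ n x = 0
      have hθ0 : ∀ n, θ n x = 0 := by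
        intro n
        by_contra h
        have hpos : 0 < θ n x := lt_of_le_of_ne (hθnonneg n x) (Ne.symm h)
        have hle := Summable.le_tsum (hsumm x) n (fun m _ => hterm_nonneg x m)
        have : (0 : ℝ) < (1 / 2 : ℝ) ^ (n + 1) * θ n x := by positivity
        linarith [hx0 ▸ hle]
      -- hence g n x ≤ 3/2 for all n
      have hg32 : ∀ n, g n x ≤ 3 / 2 := by
        intro n
        by_contra h
        push_neg at h
        have hpow : (2 : ℝ) ≤ 2 ^ (n + 1) := by
          calc (2 : ℝ) = 2 ^ 1 := (pow_one 2).symm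
            _ ≤ 2 ^ (n + 1) := pow_le_pow_right₀ one_le_two (by omega)
        have hs : 0 < 2 ^ (n + 1) * (g n x - 1) - 1 := by nlinarith
        have : 0 < θ n x := by
          rw [hθdef]
          simp only
          exact lt_min (lt_of_lt_of_le hs (le_max_left _ _)) one_pos
        rw [hθ0 n] at this
        linarith
      -- the midpoint between y₀ and x lies in every W n
      set m : X := y₀ + (2⁻¹ : ℝ) • (x - y₀) with hmdef
      have hmW : ∀ n, m ∈ W n := by
        intro n
        have hmy : m - y₀ = (2⁻¹ : ℝ) • (x - y₀) := by
          rw [hmdef]; abel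
        have hlt : gauge (C n) (m - y₀) < 1 := by
          rw [hmy, gauge_smul_of_nonneg (by norm_num : (0:ℝ) ≤ 2⁻¹), smul_eq_mul]
          have := hg32 n
          rw [hgdef] at this
          simp only at this
          linarith
        have := gauge_lt_one_eq_self_of_isOpen (hCconv n) (h0C n) (hCopen n)
        have hmem : m - y₀ ∈ C n := by rw [← this]; exact hlt
        exact (hmemC n m).mpr hmem
      have hmY : m ∈ (Y : Set X) := by
        have hmU : ∀ n, m ∈ U n := by
          intro n
          exact ((hmemW n m).mp (hmW n)).2 ⟨n, by omega⟩
        have : m ∈ ⋂ n, U n := mem_iInter.mpr hmU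
        rw [hInter] at this
        exact this.2
      have hx_eq : x = (2 : ℝ) • m - y₀ := by
        rw [hmdef, smul_add, smul_smul]
        norm_num
        module
      rw [hx_eq]
      exact Submodule.sub_mem Y (Submodule.smul_mem Y 2 hmY) hy₀Y
    · rintro ⟨hxA, hxY⟩
      refine ⟨hxA, ?_⟩
      have hθ0 : ∀ n, θ n x = 0 := by
        intro n
        have hxW : x ∈ W n := hAYW n ⟨hxA, hxY⟩
        have hg1 : g n x ≤ 1 := gauge_le_one_of_mem ((hmemC n x).mp hxW)
        have hpow : (0 : ℝ) < 2 ^ (n + 1) := by positivity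
        have hs : 2 ^ (n + 1) * (g n x - 1) - 1 ≤ 0 := by nlinarith
        show min (max ((2 : ℝ) ^ (n + 1) * (g n x - 1) - 1) 0) 1 = 0
        rw [max_eq_right hs]
        exact min_eq_left zero_le_one
      have : ∀ n, (1 / 2 : ℝ) ^ (n + 1) * θ n x = 0 := by
        intro n; rw [hθ0 n, mul_zero]
      calc ∑' n, (1 / 2 : ℝ) ^ (n + 1) * θ n x = ∑' _ : ℕ, (0 : ℝ) := tsum_congr this
        _ = 0 := tsum_zero
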